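/- Let G be a compactly generated locally compact group with compact generating set S, (V, π) a uniformly bounded Banach G-module, and b ∈ Z¹(G, π) a continuous 1-cocycle. If b is an almost coboundary (i.e. in the closure of coboundaries for uniform convergence on compacts), then b is sublinear: ‖b(g)‖ = o(|g|_S) as |g|_S → ∞. -/

import Mathlib

open Pointwise

/-- Word length of `g` with respect to a generating set `S`: the least `n` with `g ∈ S^n`. -/
noncomputable def wordLength {G : Type*} [Group G] (S : Set G) (g : G) : ℕ :=
  sInf {n : ℕ | g ∈ S ^ n}

/-- an almost coboundary is sublinear with respect to the word length. -/
theorem stmt10 {G V : Type*} [Group G] [TopologicalSpace G] [IsTopologicalGroup G]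
    [LocallyCompactSpace G]
    [NormedAddCommGroup V] [NormedSpace ℝ V] [CompleteSpace V]
    (S : Set G) (hScomp : IsCompact S) (hS1 : (1 : G) ∈ S) (hSsymm : S⁻¹ = S)
    (hSgen : ∀ g : G, ∃ n : ℕ, g ∈ S ^ n)
    (ρ : G →* (V →L[ℝ] V)) (Cb : ℝ) (hub : ∀ g : G, ‖ρ g‖ ≤ Cb)
    (b : G → V) (hbcont : Continuous b)
    (hcoc : ∀ g h : G, b (g * h) = ρ g (b h) + b g)
    (hac : ∀ ε : ℝ, 0 < ε → ∃ v : V, ∀ s ∈ S, ‖ρ s v + b s - v‖ ≤ ε) :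
    ∀ ε : ℝ, 0 < ε → ∃ R : ℕ, ∀ g : G,
      R ≤ wordLength S g → ‖b g‖ ≤ ε * wordLength S g := by
  intro ε hε
  set C := max Cb 1 with hCdef
  have hC : ∀ g : G, ‖ρ g‖ ≤ C := fun g => le_max_of_le_left (hub g)
  have hC1 : (1 : ℝ) ≤ C := le_max_right _ _
  have hC0 : (0 : ℝ) < C := lt_of_lt_of_le one_pos hC1
  have hε' : 0 < ε / (2 * C) := by positivity
  obtain ⟨v, hv⟩ := hac (ε / (2 * C)) hε'
  have hb1 : b 1 = 0 := by
    have h := hcoc 1 1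
    simp only [mul_one, map_one, ContinuousLinearMap.one_apply] at h
    have : b 1 + 0 = b 1 + b 1 := by rw [add_zero]; exact h
    exact (add_left_cancel this).symm
  have hρ : ∀ (g : G) (w : V), ‖ρ g w‖ ≤ C * ‖w‖ := fun g w =>
    le_trans ((ρ g).le_opNorm w) (mul_le_mul_of_nonneg_right (hC g) (norm_nonneg w))
  have hCE : C * (ε / (2 * C)) = ε / 2 := by field_simp
  have key : ∀ n : ℕ, ∀ g ∈ S ^ n, ‖ρ g v + b g - v‖ ≤ n * (ε / 2) := by
    intro n
    induction n with
    | zero =>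
      intro g hg
      rw [pow_zero, Set.mem_one] at hg
      subst hg
      simp [hb1]
    | succ n ih =>
      intro g hg
      rw [pow_succ] at hg
      obtain ⟨x, hx, s, hs, rfl⟩ := hg
      have heq : ρ (x * s) v + b (x * s) - v
          = ρ x (ρ s v + b s - v) + (ρ x v + b x - v) := by
        rw [hcoc x s]
        simp only [map_mul, ContinuousLinearMap.mul_apply, map_add, map_sub]
        abel
      have h1 : ‖ρ x (ρ s v + b s - v)‖ ≤ ε / 2 := by
        calc ‖ρ x (ρ s v + b s - v)‖ ≤ C * ‖ρ s v + b s - v‖ := hρ x _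
          _ ≤ C * (ε / (2 * C)) :=
            mul_le_mul_of_nonneg_left (hv s hs) (le_of_lt hC0)
          _ = ε / 2 := hCE
      have h2 := ih x hx
      calc ‖ρ (x * s) v + b (x * s) - v‖
          ≤ ‖ρ x (ρ s v + b s - v)‖ + ‖ρ x v + b x - v‖ := by
            rw [heq]; exact norm_add_le _ _
        _ ≤ ε / 2 + n * (ε / 2) := add_le_add h1 h2
        _ = (n + 1 : ℕ) * (ε / 2) := by push_cast; ring
  refine ⟨⌈2 * (C * ‖v‖ + ‖v‖) / ε⌉₊, fun g hR => ?_⟩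
  set n := wordLength S g with hn
  have hmem : g ∈ S ^ n := Nat.sInf_mem (hSgen g)
  have hkey := key n g hmem
  have hsplit : b g = (ρ g v + b g - v) + (v - ρ g v) := by abel
  have hbg : ‖b g‖ ≤ n * (ε / 2) + (‖v‖ + C * ‖v‖) := by
    calc ‖b g‖ = ‖(ρ g v + b g - v) + (v - ρ g v)‖ := by rw [← hsplit]
      _ ≤ ‖ρ g v + b g - v‖ + ‖v - ρ g v‖ := norm_add_le _ _
      _ ≤ n * (ε / 2) + (‖v‖ + ‖ρ g v‖) :=
          add_le_add hkey (norm_sub_le _ _)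
      _ ≤ n * (ε / 2) + (‖v‖ + C * ‖v‖) := by
          gcongr; exact hρ g v
  have hceil : 2 * (C * ‖v‖ + ‖v‖) / ε ≤ (⌈2 * (C * ‖v‖ + ‖v‖) / ε⌉₊ : ℝ) :=
    Nat.le_ceil _
  have hRn : (⌈2 * (C * ‖v‖ + ‖v‖) / ε⌉₊ : ℝ) ≤ (n : ℝ) := by exact_mod_cast hR
  have h3 : 2 * (C * ‖v‖ + ‖v‖) ≤ ε * n := by
    rw [div_le_iff₀ hε] at hceil
    calc 2 * (C * ‖v‖ + ‖v‖) ≤ (⌈2 * (C * ‖v‖ + ‖v‖) / ε⌉₊ : ℝ) * ε := hceil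
      _ ≤ (n : ℝ) * ε := mul_le_mul_of_nonneg_right hRn (le_of_lt hε)
      _ = ε * n := mul_comm _ _
  linarith
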